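/- arXiv:2505.14168 — 2 statements merged into one kernel-verified Lean document; each statement's English description precedes it below -/
import Mathlib

section
/- Let N ≥ 3 be an integer and let σ be a real constant with 0 < σ < N−2. Then there exists a constant C > 0 such that for every y ∈ ℝ^N, ∫_{ℝ^N} |y−z|^{−(N−2)} (1+|z|)^{−(2+σ)} dz ≤ C (1+|y|)^{−σ}. -/
open MeasureTheory Real
open scoped ENNReal NNReal

open Set in
lemma lint_Ioc {q s : ℝ} (hs : 0 < s) (hq : -1 < q) :
    ∫⁻ r in Ioc (0:ℝ) s, ENNReal.ofReal (r ^ q) =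
      ENNReal.ofReal (s ^ (q + 1) / (q + 1)) := by
  have hint : IntegrableOn (fun r : ℝ => r ^ q) (Ioc 0 s) := by
    rw [← intervalIntegrable_iff_integrableOn_Ioc_of_le hs.le]
    exact intervalIntegral.intervalIntegrable_rpow' hq
  rw [← ofReal_integral_eq_lintegral_ofReal hint ?pos]
  case pos =>
    filter_upwards [ae_restrict_mem measurableSet_Ioc] with r hr
    exact Real.rpow_nonneg hr.1.le _
  congr 1
  rw [← intervalIntegral.integral_of_le hs.le, integral_rpow (Or.inl hq),
    Real.zero_rpow (by linarith)]
  ring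

open Set in
lemma lint_Ioi {q s : ℝ} (hs : 0 < s) (hq : q < -1) :
    ∫⁻ r in Ioi s, ENNReal.ofReal (r ^ q) =
      ENNReal.ofReal (-s ^ (q + 1) / (q + 1)) := by
  rw [← ofReal_integral_eq_lintegral_ofReal (integrableOn_Ioi_rpow_of_lt hq hs) ?pos]
  case pos =>
    filter_upwards [ae_restrict_mem measurableSet_Ioi] with r hr
    exact Real.rpow_nonneg (hs.le.trans hr.le) _
  rw [integral_Ioi_rpow_of_lt hq hs]

open Set Metric in
lemma polar_lintegral {E : Type*} [NormedAddCommGroup E] [NormedSpace ℝ E]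
    [MeasurableSpace E] [BorelSpace E] [FiniteDimensional ℝ E] [Nontrivial E]
    (μ : Measure E) [μ.IsAddHaarMeasure] (f : ℝ → ℝ≥0∞) (hf : Measurable f) :
    ∫⁻ x, f ‖x‖ ∂μ = μ.toSphere Set.univ *
      ∫⁻ r in Ioi (0:ℝ), ENNReal.ofReal (r ^ (Module.finrank ℝ E - 1)) * f r := by
  have h0 : ∫⁻ x, f ‖x‖ ∂μ = ∫⁻ x : ({(0:E)}ᶜ : Set E), f ‖x.1‖ ∂(μ.comap (↑)) := by
    rw [lintegral_subtype_comap (measurableSet_singleton (0:E)).compl (fun z => f ‖z‖),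
      restrict_compl_singleton]
  have hmeas : Measurable fun p : sphere (0:E) 1 × Ioi (0:ℝ) => f p.2.1 :=
    hf.comp (measurable_subtype_coe.comp measurable_snd)
  have h1 := (μ.measurePreserving_homeomorphUnitSphereProd).lintegral_comp hmeas
  have hd : Measurable fun r : Ioi (0:ℝ) => ENNReal.ofReal (r.1 ^ (Module.finrank ℝ E - 1)) :=
    (measurable_subtype_coe.pow_const _).ennreal_ofReal
  calc ∫⁻ x, f ‖x‖ ∂μ
      = ∫⁻ x : ({(0:E)}ᶜ : Set E), f ‖x.1‖ ∂(μ.comap (↑)) := h0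
    _ = ∫⁻ p : sphere (0:E) 1 × Ioi (0:ℝ), f p.2.1
          ∂(μ.toSphere.prod (.volumeIoiPow (Module.finrank ℝ E - 1))) := by
        rw [← h1]; refine lintegral_congr fun x => ?_; simp
    _ = μ.toSphere Set.univ *
          ∫⁻ r : Ioi (0:ℝ), f r.1 ∂(Measure.volumeIoiPow (Module.finrank ℝ E - 1)) := by
        rw [lintegral_prod _ hmeas.aemeasurable]
        simp [lintegral_const, mul_comm]
    _ = μ.toSphere Set.univ *
          ∫⁻ r in Ioi (0:ℝ), ENNReal.ofReal (r ^ (Module.finrank ℝ E - 1)) * f r := by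
        rw [Measure.volumeIoiPow,
          lintegral_withDensity_eq_lintegral_mul _ hd (g := fun r : Ioi (0:ℝ) => f r.1)
            (hf.comp measurable_subtype_coe),
          show (∫⁻ (a : Ioi (0:ℝ)), ((fun r : Ioi (0:ℝ) => ENNReal.ofReal (r.1 ^ (Module.finrank ℝ E - 1))) * fun r : Ioi (0:ℝ) => f r.1) a ∂Measure.comap Subtype.val volume)
            = ∫⁻ (a : Ioi (0:ℝ)), (fun r : ℝ => ENNReal.ofReal (r ^ (Module.finrank ℝ E - 1)) * f r) a.1 ∂Measure.comap Subtype.val volume from rfl,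
          lintegral_subtype_comap measurableSet_Ioi
            (fun r => ENNReal.ofReal (r ^ (Module.finrank ℝ E - 1)) * f r)]

open Set in
lemma radial_Iic (N : ℕ) (hN : 1 ≤ N) {p s : ℝ} (hs : 0 < s) (hp : -1 < ((N:ℝ) - 1) + p) :
    ∫⁻ z : EuclideanSpace ℝ (Fin N), (Iic s).indicator (fun r => ENNReal.ofReal (r ^ p)) ‖z‖
      = (volume : Measure (EuclideanSpace ℝ (Fin N))).toSphere Set.univ *
        ENNReal.ofReal (s ^ (((N:ℝ) - 1) + p + 1) / (((N:ℝ) - 1) + p + 1)) := by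
  haveI : Nonempty (Fin N) := ⟨⟨0, hN⟩⟩
  have hf : Measurable fun r : ℝ => (Iic s).indicator (fun r => ENNReal.ofReal (r ^ p)) r :=
    Measurable.indicator (by fun_prop) measurableSet_Iic
  rw [polar_lintegral _ _ hf, finrank_euclideanSpace_fin]
  congr 1
  simp_rw [← Set.indicator_mul_right _ (fun r : ℝ => ENNReal.ofReal (r ^ (N - 1)))]
  rw [lintegral_indicator measurableSet_Iic, Measure.restrict_restrict measurableSet_Iic,
    inter_comm, Ioi_inter_Iic]
  rw [setLIntegral_congr_fun measurableSet_Ioc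
    (fun r (hr : r ∈ Ioc 0 s) => by
      rw [← ENNReal.ofReal_mul (pow_nonneg hr.1.le _), ← Real.rpow_natCast r (N - 1),
        ← Real.rpow_add hr.1, Nat.cast_sub hN, Nat.cast_one]),
    lint_Ioc hs hp]

open Set in
lemma radial_Ioi (N : ℕ) (hN : 1 ≤ N) {p s : ℝ} (hs : 0 < s) (hp : ((N:ℝ) - 1) + p < -1) :
    ∫⁻ z : EuclideanSpace ℝ (Fin N), (Ioi s).indicator (fun r => ENNReal.ofReal (r ^ p)) ‖z‖
      = (volume : Measure (EuclideanSpace ℝ (Fin N))).toSphere Set.univ *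
        ENNReal.ofReal (-s ^ (((N:ℝ) - 1) + p + 1) / (((N:ℝ) - 1) + p + 1)) := by
  haveI : Nonempty (Fin N) := ⟨⟨0, hN⟩⟩
  have hf : Measurable fun r : ℝ => (Ioi s).indicator (fun r => ENNReal.ofReal (r ^ p)) r :=
    Measurable.indicator (by fun_prop) measurableSet_Ioi
  rw [polar_lintegral _ _ hf, finrank_euclideanSpace_fin]
  congr 1
  simp_rw [← Set.indicator_mul_right _ (fun r : ℝ => ENNReal.ofReal (r ^ (N - 1)))]
  rw [lintegral_indicator measurableSet_Ioi, Measure.restrict_restrict measurableSet_Ioi,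
    inter_eq_self_of_subset_left (Ioi_subset_Ioi hs.le)]
  rw [setLIntegral_congr_fun measurableSet_Ioi
    (fun r (hr : r ∈ Ioi s) => by
      rw [← ENNReal.ofReal_mul (pow_nonneg (hs.le.trans hr.le) _), ← Real.rpow_natCast r (N - 1),
        ← Real.rpow_add (hs.trans hr), Nat.cast_sub hN, Nat.cast_one]),
    lint_Ioi hs hp]

lemma two_inv_rpow (x : ℝ) : ((2:ℝ)⁻¹) ^ (-x) = (2:ℝ) ^ x := by
  rw [Real.inv_rpow (by norm_num), Real.rpow_neg (by norm_num), inv_inv]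

set_option maxHeartbeats 2000000 in
theorem stmt1 (N : ℕ) (hN : 3 ≤ N) (σ : ℝ) (hσ0 : 0 < σ) (hσ : σ < (N : ℝ) - 2) :
    ∃ C > (0 : ℝ), ∀ y : EuclideanSpace ℝ (Fin N),
      (∫ z : EuclideanSpace ℝ (Fin N),
          ‖y - z‖ ^ (-((N : ℝ) - 2)) * (1 + ‖z‖) ^ (-(2 + σ))) ≤
        C * (1 + ‖y‖) ^ (-σ) := by
  haveI : Nonempty (Fin N) := ⟨⟨0, by omega⟩⟩
  have hN3 : (3:ℝ) ≤ (N:ℝ) := by exact_mod_cast hN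
  set a : ℝ := (N:ℝ) - 2 with ha
  set b : ℝ := 2 + σ with hb
  have ha0 : 0 < a := by rw [ha]; linarith
  have hb0 : 0 < b := by rw [hb]; linarith
  have hbN : b < (N:ℝ) := by rw [hb]; rw [ha] at hσ; linarith
  have hab : a + b = (N:ℝ) + σ := by rw [ha, hb]; ring
  set κ := (volume : Measure (EuclideanSpace ℝ (Fin N))).toSphere Set.univ with hκdef
  have hκtop : κ ≠ ⊤ := measure_ne_top _ _
  have hκ0 : 0 ≤ κ.toReal := ENNReal.toReal_nonneg
  have hd₂0 : 0 < (N:ℝ) - b := by linarith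
  set K₁ : ℝ := (2:ℝ)^σ / 2 with hK₁def
  set K₂ : ℝ := (2:ℝ)^(a + ((N:ℝ) - b)) / ((N:ℝ) - b) with hK₂def
  set K₃ : ℝ := (2:ℝ)^(a - σ) / σ with hK₃def
  have hK₁ : 0 < K₁ := by rw [hK₁def]; positivity
  have hK₂ : 0 < K₂ := by rw [hK₂def]; positivity
  have hK₃ : 0 < K₃ := by rw [hK₃def]; positivity
  refine ⟨κ.toReal * (K₁ + K₂ + K₃) + 1, by nlinarith, fun y => ?_⟩
  set R : ℝ := 1 + ‖y‖ with hR
  have hR0 : 0 < R := by rw [hR]; positivity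
  have hR1 : 1 ≤ R := by rw [hR]; linarith [norm_nonneg y]
  set s₁ : ℝ := 2⁻¹ * R with hs₁def
  set s₂ : ℝ := 2 * R with hs₂def
  have hs₁0 : 0 < s₁ := by rw [hs₁def]; positivity
  have hs₂0 : 0 < s₂ := by rw [hs₂def]; positivity
  set f₁ : ℝ → ℝ≥0∞ := (Set.Iic s₁).indicator (fun r => ENNReal.ofReal (r ^ (-a))) with hf₁def
  set f₂ : ℝ → ℝ≥0∞ := (Set.Iic s₂).indicator (fun r => ENNReal.ofReal (r ^ (-b))) with hf₂def
  set f₃ : ℝ → ℝ≥0∞ := (Set.Ioi s₂).indicator (fun r => ENNReal.ofReal (r ^ (-(a+b)))) with hf₃def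
  have mf₁ : Measurable f₁ := Measurable.indicator (by fun_prop) measurableSet_Iic
  have mf₂ : Measurable f₂ := Measurable.indicator (by fun_prop) measurableSet_Iic
  have mf₃ : Measurable f₃ := Measurable.indicator (by fun_prop) measurableSet_Ioi
  set c₁ : ℝ≥0∞ := ENNReal.ofReal (s₁ ^ (-b)) with hc₁def
  set c₂ : ℝ≥0∞ := ENNReal.ofReal (s₁ ^ (-a)) with hc₂def
  set c₃ : ℝ≥0∞ := ENNReal.ofReal ((2:ℝ) ^ a) with hc₃def
  -- pointwise bound
  have key : ∀ z : EuclideanSpace ℝ (Fin N), z ≠ 0 →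
      ENNReal.ofReal (‖y - z‖ ^ (-a) * (1 + ‖z‖) ^ (-b)) ≤
        c₁ * f₁ ‖y - z‖ + (c₂ * f₂ ‖z‖ + c₃ * f₃ ‖z‖) := by
    intro z hz
    have hz0 : 0 < ‖z‖ := norm_pos_iff.mpr hz
    have hyz : ‖y‖ - ‖z‖ ≤ ‖y - z‖ := norm_sub_norm_le y z
    have hzy : ‖z‖ - ‖y‖ ≤ ‖y - z‖ := by
      simpa [norm_sub_rev] using norm_sub_norm_le z y
    have hyznn : 0 ≤ ‖y - z‖ := norm_nonneg _
    by_cases hA : ‖y - z‖ ≤ s₁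
    · have hmem : f₁ ‖y - z‖ = ENNReal.ofReal (‖y - z‖ ^ (-a)) := by
        rw [hf₁def]; exact Set.indicator_of_mem (Set.mem_Iic.mpr hA) _
      have hs1z : s₁ ≤ 1 + ‖z‖ := by linarith
      have h1 : (1 + ‖z‖) ^ (-b) ≤ s₁ ^ (-b) :=
        Real.rpow_le_rpow_of_nonpos hs₁0 hs1z (by linarith)
      refine le_trans ?_ le_self_add
      rw [hmem, hc₁def, ← ENNReal.ofReal_mul (Real.rpow_nonneg hs₁0.le _)]
      apply ENNReal.ofReal_le_ofReal
      have := mul_le_mul_of_nonneg_left h1 (Real.rpow_nonneg hyznn (-a))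
      linarith
    · push_neg at hA
      by_cases hC : s₂ < ‖z‖
      · have hmem : f₃ ‖z‖ = ENNReal.ofReal (‖z‖ ^ (-(a+b))) := by
          rw [hf₃def]; exact Set.indicator_of_mem (Set.mem_Ioi.mpr hC) _
        have h2 : 2⁻¹ * ‖z‖ ≤ ‖y - z‖ := by linarith
        have h3 : ‖y - z‖ ^ (-a) ≤ (2⁻¹ * ‖z‖) ^ (-a) :=
          Real.rpow_le_rpow_of_nonpos (by positivity) h2 (by linarith)
        have h4 : (2⁻¹ * ‖z‖ : ℝ) ^ (-a) = 2^a * ‖z‖^(-a) := by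
          rw [Real.mul_rpow (by norm_num) hz0.le, two_inv_rpow]
        have h5 : (1+‖z‖)^(-b) ≤ ‖z‖^(-b) :=
          Real.rpow_le_rpow_of_nonpos hz0 (by linarith) (by linarith)
        refine le_trans ?_ (le_add_self.trans le_add_self)
        rw [hmem, hc₃def, ← ENNReal.ofReal_mul (Real.rpow_nonneg (by norm_num) _)]
        apply ENNReal.ofReal_le_ofReal
        have h6 : ‖y - z‖ ^ (-a) * (1 + ‖z‖) ^ (-b) ≤ (2^a * ‖z‖^(-a)) * ‖z‖^(-b) := by
          rw [← h4]
          exact mul_le_mul h3 h5 (Real.rpow_nonneg (by positivity) _)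
            (Real.rpow_nonneg (by positivity) _)
        calc ‖y - z‖ ^ (-a) * (1 + ‖z‖) ^ (-b) ≤ (2^a * ‖z‖^(-a)) * ‖z‖^(-b) := h6
          _ = 2^a * ‖z‖ ^ (-(a+b)) := by
              rw [mul_assoc, ← Real.rpow_add hz0]; congr 1; ring
      · push_neg at hC
        have hmem : f₂ ‖z‖ = ENNReal.ofReal (‖z‖ ^ (-b)) := by
          rw [hf₂def]; exact Set.indicator_of_mem (Set.mem_Iic.mpr hC) _
        have h3 : ‖y - z‖ ^ (-a) ≤ s₁ ^ (-a) :=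
          Real.rpow_le_rpow_of_nonpos hs₁0 hA.le (by linarith)
        have h5 : (1+‖z‖)^(-b) ≤ ‖z‖^(-b) :=
          Real.rpow_le_rpow_of_nonpos hz0 (by linarith) (by linarith)
        refine le_trans ?_ (le_self_add.trans le_add_self)
        rw [hmem, hc₂def, ← ENNReal.ofReal_mul (Real.rpow_nonneg hs₁0.le _)]
        apply ENNReal.ofReal_le_ofReal
        exact mul_le_mul h3 h5 (Real.rpow_nonneg (by positivity) _)
          (Real.rpow_nonneg hs₁0.le _)
  -- a.e. nonzero
  have h0ae : ∀ᵐ z : EuclideanSpace ℝ (Fin N) ∂volume, z ≠ 0 := by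
    rw [ae_iff]
    simpa using measure_singleton (0 : EuclideanSpace ℝ (Fin N))
  have hFmeas : Measurable fun z : EuclideanSpace ℝ (Fin N) =>
      ‖y - z‖ ^ (-a) * (1 + ‖z‖) ^ (-b) := by fun_prop
  have hFnn : 0 ≤ᵐ[volume] fun z : EuclideanSpace ℝ (Fin N) =>
      ‖y - z‖ ^ (-a) * (1 + ‖z‖) ^ (-b) := by
    refine Filter.Eventually.of_forall fun z => ?_
    have := Real.rpow_nonneg (norm_nonneg (y - z)) (-a)
    have h2 : (0:ℝ) ≤ (1 + ‖z‖) ^ (-b) := Real.rpow_nonneg (by positivity) (-b)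
    positivity
  rw [integral_eq_lintegral_of_nonneg_ae hFnn hFmeas.aestronglyMeasurable]
  -- translation invariance
  have I₁trans : ∫⁻ z : EuclideanSpace ℝ (Fin N), f₁ ‖y - z‖ =
      ∫⁻ z : EuclideanSpace ℝ (Fin N), f₁ ‖z‖ :=
    (MeasureTheory.Measure.measurePreserving_sub_left volume y).lintegral_comp (mf₁.comp measurable_norm)
  have hI₁ := radial_Iic N (by omega) (p := -a) hs₁0 (by linarith)
  have hI₂ := radial_Iic N (by omega) (p := -b) hs₂0 (by linarith)
  have hI₃ := radial_Ioi N (by omega) (p := -(a+b)) hs₂0 (by linarith)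
  have mfirst : Measurable fun z : EuclideanSpace ℝ (Fin N) => c₁ * f₁ ‖y - z‖ :=
    (mf₁.comp ((measurable_const.sub measurable_id).norm)).const_mul c₁
  have msecond : Measurable fun z : EuclideanSpace ℝ (Fin N) => c₂ * f₂ ‖z‖ :=
    (mf₂.comp measurable_norm).const_mul c₂
  have G_eq : (∫⁻ z : EuclideanSpace ℝ (Fin N),
        (c₁ * f₁ ‖y - z‖ + (c₂ * f₂ ‖z‖ + c₃ * f₃ ‖z‖))) =
      c₁ * (∫⁻ z : EuclideanSpace ℝ (Fin N), f₁ ‖y - z‖) +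
        (c₂ * (∫⁻ z : EuclideanSpace ℝ (Fin N), f₂ ‖z‖) +
          c₃ * (∫⁻ z : EuclideanSpace ℝ (Fin N), f₃ ‖z‖)) := by
    rw [lintegral_add_left mfirst, lintegral_add_left msecond,
      lintegral_const_mul c₁ (show Measurable fun z : EuclideanSpace ℝ (Fin N) => f₁ ‖y - z‖
        from mf₁.comp ((measurable_const.sub measurable_id).norm)),
      lintegral_const_mul c₂ (show Measurable fun z : EuclideanSpace ℝ (Fin N) => f₂ ‖z‖
        from mf₂.comp measurable_norm),
      lintegral_const_mul c₃ (show Measurable fun z : EuclideanSpace ℝ (Fin N) => f₃ ‖z‖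
        from mf₃.comp measurable_norm)]
  -- real constants algebra
  have e₁ : s₁ ^ (-b) * (s₁ ^ (((N:ℝ)-1) + -a + 1) / (((N:ℝ)-1) + -a + 1)) = K₁ * R^(-σ) := by
    have h2 : ((N:ℝ)-1) + -a + 1 = 2 := by rw [ha]; ring
    rw [h2]
    have h3 : s₁ ^ (-b) * s₁ ^ (2:ℝ) = s₁ ^ (-σ) := by
      rw [← Real.rpow_add hs₁0]; congr 1; rw [hb]; ring
    have h4 : s₁ ^ (-σ) = 2^σ * R^(-σ) := by
      rw [hs₁def, Real.mul_rpow (by norm_num) hR0.le, two_inv_rpow]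
    calc s₁^(-b) * (s₁^(2:ℝ)/2) = (s₁^(-b) * s₁^(2:ℝ))/2 := by ring
      _ = (2^σ * R^(-σ))/2 := by rw [h3, h4]
      _ = K₁ * R^(-σ) := by rw [hK₁def]; ring
  have e₂ : s₁ ^ (-a) * (s₂ ^ (((N:ℝ)-1) + -b + 1) / (((N:ℝ)-1) + -b + 1)) = K₂ * R^(-σ) := by
    have h2 : ((N:ℝ)-1) + -b + 1 = (N:ℝ) - b := by ring
    rw [h2]
    have hs1 : s₁ ^ (-a) = 2^a * R^(-a) := by
      rw [hs₁def, Real.mul_rpow (by norm_num) hR0.le, two_inv_rpow]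
    have hs2 : s₂ ^ ((N:ℝ) - b) = 2^((N:ℝ)-b) * R^((N:ℝ)-b) := by
      rw [hs₂def, Real.mul_rpow (by norm_num) hR0.le]
    have hRcomb : R^(-a) * R^((N:ℝ)-b) = R^(-σ) := by
      rw [← Real.rpow_add hR0]; congr 1; rw [ha, hb]; ring
    have h2comb : (2:ℝ)^a * 2^((N:ℝ)-b) = 2^(a + ((N:ℝ)-b)) := by
      rw [← Real.rpow_add (by norm_num)]
    calc s₁^(-a) * (s₂^((N:ℝ)-b)/((N:ℝ)-b))
        = ((2:ℝ)^a * 2^((N:ℝ)-b)) * (R^(-a) * R^((N:ℝ)-b)) / ((N:ℝ)-b) := by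
          rw [hs1, hs2]; ring
      _ = 2^(a+((N:ℝ)-b)) * R^(-σ) / ((N:ℝ)-b) := by rw [hRcomb, h2comb]
      _ = K₂ * R^(-σ) := by rw [hK₂def]; ring
  have e₃ : (2:ℝ)^a * (-s₂ ^ (((N:ℝ)-1) + -(a+b) + 1) / (((N:ℝ)-1) + -(a+b) + 1))
      = K₃ * R^(-σ) := by
    have h2 : ((N:ℝ)-1) + -(a+b) + 1 = -σ := by rw [ha, hb]; ring
    rw [h2]
    have hs2 : s₂ ^ (-σ) = 2^(-σ) * R^(-σ) := by
      rw [hs₂def, Real.mul_rpow (by norm_num) hR0.le]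
    calc (2:ℝ)^a * (-s₂^(-σ)/(-σ)) = 2^a * (s₂^(-σ)/σ) := by
          rw [neg_div_neg_eq]
      _ = 2^a * 2^(-σ) * R^(-σ)/σ := by rw [hs2]; ring
      _ = K₃ * R^(-σ) := by
          rw [hK₃def, show a - σ = a + -σ from sub_eq_add_neg a σ,
            Real.rpow_add (by norm_num : (0:ℝ) < 2)]
          ring
  have hκeq : κ = ENNReal.ofReal κ.toReal := (ENNReal.ofReal_toReal hκtop).symm
  rw [← hf₁def] at hI₁
  rw [← hf₂def] at hI₂
  rw [← hf₃def] at hI₃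
  rw [← hκdef] at hI₁ hI₂ hI₃
  -- term-wise identities in ℝ≥0∞
  have t₁ : c₁ * (κ * ENNReal.ofReal (s₁ ^ (((N:ℝ)-1) + -a + 1) / (((N:ℝ)-1) + -a + 1)))
      = ENNReal.ofReal (κ.toReal * (K₁ * R^(-σ))) := by
    rw [hc₁def, hκeq, ← ENNReal.ofReal_mul ENNReal.toReal_nonneg,
      ← ENNReal.ofReal_mul (Real.rpow_nonneg hs₁0.le _)]
    congr 1
    rw [show s₁^(-b) * (κ.toReal * (s₁ ^ (((N:ℝ)-1) + -a + 1) / (((N:ℝ)-1) + -a + 1)))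
        = κ.toReal * (s₁^(-b) * (s₁ ^ (((N:ℝ)-1) + -a + 1) / (((N:ℝ)-1) + -a + 1))) from by ring,
      e₁, ENNReal.toReal_ofReal ENNReal.toReal_nonneg]
  have t₂ : c₂ * (κ * ENNReal.ofReal (s₂ ^ (((N:ℝ)-1) + -b + 1) / (((N:ℝ)-1) + -b + 1)))
      = ENNReal.ofReal (κ.toReal * (K₂ * R^(-σ))) := by
    rw [hc₂def, hκeq, ← ENNReal.ofReal_mul ENNReal.toReal_nonneg,
      ← ENNReal.ofReal_mul (Real.rpow_nonneg hs₁0.le _)]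
    congr 1
    rw [show s₁^(-a) * (κ.toReal * (s₂ ^ (((N:ℝ)-1) + -b + 1) / (((N:ℝ)-1) + -b + 1)))
        = κ.toReal * (s₁^(-a) * (s₂ ^ (((N:ℝ)-1) + -b + 1) / (((N:ℝ)-1) + -b + 1))) from by ring,
      e₂, ENNReal.toReal_ofReal ENNReal.toReal_nonneg]
  have t₃ : c₃ * (κ * ENNReal.ofReal (-s₂ ^ (((N:ℝ)-1) + -(a+b) + 1) / (((N:ℝ)-1) + -(a+b) + 1)))
      = ENNReal.ofReal (κ.toReal * (K₃ * R^(-σ))) := by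
    rw [hc₃def, hκeq, ← ENNReal.ofReal_mul ENNReal.toReal_nonneg,
      ← ENNReal.ofReal_mul (Real.rpow_nonneg (by norm_num : (0:ℝ) ≤ 2) _)]
    congr 1
    rw [show (2:ℝ)^a * (κ.toReal * (-s₂ ^ (((N:ℝ)-1) + -(a+b) + 1) / (((N:ℝ)-1) + -(a+b) + 1)))
        = κ.toReal * ((2:ℝ)^a * (-s₂ ^ (((N:ℝ)-1) + -(a+b) + 1) / (((N:ℝ)-1) + -(a+b) + 1)))
        from by ring, e₃, ENNReal.toReal_ofReal ENNReal.toReal_nonneg]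
  have hRσ : (0:ℝ) ≤ R^(-σ) := Real.rpow_nonneg hR0.le _
  have main : (∫⁻ z : EuclideanSpace ℝ (Fin N),
      ENNReal.ofReal (‖y - z‖ ^ (-a) * (1 + ‖z‖) ^ (-b))) ≤
      ENNReal.ofReal ((κ.toReal * (K₁ + K₂ + K₃)) * R^(-σ)) := by
    refine (lintegral_mono_ae (h0ae.mono fun z hz => key z hz)).trans ?_
    rw [G_eq, I₁trans, hI₁, hI₂, hI₃, t₁, t₂, t₃,
      ← ENNReal.ofReal_add (by positivity) (by positivity),
      ← ENNReal.ofReal_add (by positivity) (by positivity)]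
    exact ENNReal.ofReal_le_ofReal (le_of_eq (by ring))
  calc (∫⁻ z : EuclideanSpace ℝ (Fin N),
        ENNReal.ofReal (‖y - z‖ ^ (-a) * (1 + ‖z‖) ^ (-b))).toReal
      ≤ (ENNReal.ofReal ((κ.toReal * (K₁ + K₂ + K₃)) * R^(-σ))).toReal :=
        ENNReal.toReal_mono ENNReal.ofReal_ne_top main
    _ = (κ.toReal * (K₁ + K₂ + K₃)) * R^(-σ) :=
        ENNReal.toReal_ofReal (mul_nonneg (mul_nonneg hκ0 (by linarith)) hRσ)
    _ ≤ (κ.toReal * (K₁ + K₂ + K₃) + 1) * R^(-σ) :=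
        mul_le_mul_of_nonneg_right (by linarith) hRσ
end

section
/- Let N ≥ 3 be an integer. Then there exists a constant C > 0, depending only on N, such that for all x₁, x₂ ∈ ℝ^N and all μ₁, μ₂ > 0 with μ₁|x₁−x₂| ≤ 1 and |μ₁−μ₂| ≤ μ₁/2, one has for every y ∈ ℝ^N: |U_{x₁,μ₁}(y) − U_{x₂,μ₂}(y)| ≤ C ( μ₁|x₁−x₂| + μ₁^{−1}|μ₁−μ₂| ) U_{x₁,μ₁}(y). -/
open MeasureTheory Real

/-- The Aubin–Talenti bubble `U_{x,μ}` on `ℝ^N`. -/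
noncomputable def bubble (N : ℕ) (x : EuclideanSpace ℝ (Fin N)) (μ : ℝ)
    (y : EuclideanSpace ℝ (Fin N)) : ℝ :=
  ((N : ℝ) * ((N : ℝ) - 2)) ^ (((N : ℝ) - 2) / 4) * μ ^ (((N : ℝ) - 2) / 2) *
    (1 + μ ^ 2 * ‖y - x‖ ^ 2) ^ (-(((N : ℝ) - 2) / 2))

private lemma rpow_lip {p : ℝ} (hp : 0 < p) {z : ℝ}
    (h1 : (31:ℝ)⁻¹ ≤ z) (h2 : z ≤ 31) :
    |z ^ p - 1| ≤ (p * 31 ^ p * 31) * |z - 1| := by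
  have hIcc : z ∈ Set.Icc ((31:ℝ)⁻¹) 31 := ⟨h1, h2⟩
  have h1m : (1:ℝ) ∈ Set.Icc ((31:ℝ)⁻¹) 31 := by constructor <;> norm_num
  have key := Convex.norm_image_sub_le_of_norm_hasDerivWithin_le
    (f := fun x : ℝ => x ^ p) (f' := fun x : ℝ => p * x ^ (p - 1))
    (C := p * 31 ^ p * 31) (s := Set.Icc ((31:ℝ)⁻¹) 31)
    (fun x hx => (Real.hasDerivAt_rpow_const (p := p)
      (Or.inl (by have : (0:ℝ) < x := lt_of_lt_of_le (by norm_num) hx.1; linarith))).hasDerivWithinAt)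
    (fun x hx => ?_) (convex_Icc _ _) h1m hIcc
  · simpa [Real.one_rpow, Real.norm_eq_abs] using key
  · have hx0 : (0:ℝ) < x := lt_of_lt_of_le (by norm_num) hx.1
    have hxp : x ^ (p - 1) = x ^ p / x := by
      rw [Real.rpow_sub hx0, Real.rpow_one]
    have h1 : x ^ p ≤ 31 ^ p := Real.rpow_le_rpow hx0.le hx.2 hp.le
    have h2 : x⁻¹ ≤ 31 := by
      rw [show (31:ℝ) = ((31:ℝ)⁻¹)⁻¹ by norm_num]
      exact inv_anti₀ (by norm_num) hx.1
    have : x ^ (p - 1) ≤ 31 ^ p * 31 := by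
      rw [hxp, div_eq_mul_inv]
      exact mul_le_mul h1 h2 (by positivity) (by positivity)
    rw [Real.norm_eq_abs, abs_mul, abs_of_pos hp, abs_of_pos (Real.rpow_pos_of_pos hx0 _)]
    calc p * x ^ (p-1) ≤ p * (31 ^ p * 31) := mul_le_mul_of_nonneg_left this hp.le
      _ = p * 31 ^ p * 31 := by ring

private lemma aux_mu {μ₁ μ₂ ε : ℝ} (hμ₁ : 0 < μ₁) (hε0 : 0 ≤ ε)
    (hεh : ε ≤ 1/2) (h : μ₁ - μ₂ ≤ μ₁ * ε) : μ₁ ≤ (1 + 2*ε) * μ₂ := by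
  nlinarith [mul_nonneg (mul_nonneg hμ₁.le hε0) (by linarith : (0:ℝ) ≤ 1 - 2*ε)]

private lemma claimA {t s d ε : ℝ} (ht0 : 0 ≤ t) (hs0 : 0 ≤ s) (hd0 : 0 ≤ d)
    (hd1 : d ≤ 1) (hε0 : 0 ≤ ε) (hεh : ε ≤ 1/2) (hs : s ≤ (1+ε)*(t+d)) :
    1 + s^2 ≤ (1 + 20*(d+ε)) * (1 + t^2) := by
  have hs2 : s^2 ≤ ((1+ε)*(t+d))^2 := by
    apply sq_le_sq' _ hs
    nlinarith [mul_nonneg hε0 (add_nonneg ht0 hd0)]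
  nlinarith [sq_nonneg (t-1), mul_nonneg hε0 hd0, mul_nonneg hd0 (sq_nonneg t),
    mul_nonneg hε0 (sq_nonneg t), mul_nonneg (mul_nonneg hε0 hε0) (sq_nonneg t),
    mul_nonneg (mul_nonneg hε0 hε0) hd0, mul_nonneg hd0 (sq_nonneg (t-1)),
    mul_nonneg hε0 (sq_nonneg (t-1)), mul_nonneg (mul_nonneg hε0 hd0) (sq_nonneg t),
    mul_nonneg (mul_nonneg hε0 hd0) (sq_nonneg (t-1))]

private lemma claimB {t s d ε : ℝ} (ht0 : 0 ≤ t) (hs0 : 0 ≤ s) (hd0 : 0 ≤ d)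
    (hd1 : d ≤ 1) (hε0 : 0 ≤ ε) (hεh : ε ≤ 1/2) (ht : t ≤ (1+2*ε)*(s+d)) :
    1 + t^2 ≤ (1 + 20*(d+ε)) * (1 + s^2) := by
  have ht2 : t^2 ≤ ((1+2*ε)*(s+d))^2 := by
    apply sq_le_sq' _ ht
    nlinarith [mul_nonneg hε0 (add_nonneg hs0 hd0)]
  nlinarith [sq_nonneg (s-1), mul_nonneg hε0 hd0, mul_nonneg hd0 (sq_nonneg s),
    mul_nonneg hε0 (sq_nonneg s), mul_nonneg (mul_nonneg hε0 hε0) (sq_nonneg s),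
    mul_nonneg (mul_nonneg hε0 hε0) hd0, mul_nonneg hd0 (sq_nonneg (s-1)),
    mul_nonneg hε0 (sq_nonneg (s-1)), mul_nonneg (mul_nonneg hε0 hd0) (sq_nonneg s),
    mul_nonneg (mul_nonneg hε0 hd0) (sq_nonneg (s-1))]

private lemma rbounds {u v δ : ℝ} (hu1 : 1 ≤ u) (hv1 : 1 ≤ v) (hδ0 : 0 ≤ δ)
    (hδ32 : δ ≤ 3/2) (hA : v ≤ (1 + 20*δ) * u) (hB : u ≤ (1 + 20*δ) * v) :
    (31:ℝ)⁻¹ ≤ u/v ∧ u/v ≤ 31 ∧ |u/v - 1| ≤ 20*δ := by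
  have hv0 : (0:ℝ) < v := by linarith
  have hu0 : (0:ℝ) < u := by linarith
  have hr_hi : u/v ≤ 1 + 20*δ := by rw [div_le_iff₀ hv0]; nlinarith
  have hr_lo1 : 1 ≤ (1 + 20*δ) * (u/v) := by
    rw [← mul_div_assoc, le_div_iff₀ hv0, one_mul]
    exact hA
  have hr0 : 0 < u/v := by positivity
  constructor
  · nlinarith
  constructor
  · linarith
  · rw [abs_le]
    constructor
    · nlinarith [mul_nonneg hδ0 hδ0]
    · linarith

private lemma key_id {a A B U V : ℝ} (hA : A ≠ 0) (hU : U ≠ 0) (hV : V ≠ 0) :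
    a * B * V⁻¹ = B / A * (U / V) * (a * A * U⁻¹) := by
  field_simp

private lemma final_comb {E P M ε δ : ℝ} (hM : 0 < M) (hP : 0 < P)
    (hε : 0 ≤ ε) (hεδ : ε ≤ δ) (h : E ≤ M * ε * P + M * (20*δ)) :
    E ≤ (P * M + 20 * M + 1) * δ := by
  have hδ0 : 0 ≤ δ := le_trans hε hεδ
  nlinarith [mul_le_mul_of_nonneg_right hεδ (mul_pos hM hP).le]

set_option maxHeartbeats 2000000 in
theorem stmt12 (N : ℕ) (hN : 3 ≤ N) :
    ∃ C > (0 : ℝ), ∀ (x₁ x₂ : EuclideanSpace ℝ (Fin N)) (μ₁ μ₂ : ℝ),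
      0 < μ₁ → 0 < μ₂ → μ₁ * ‖x₁ - x₂‖ ≤ 1 → |μ₁ - μ₂| ≤ μ₁ / 2 →
      ∀ y : EuclideanSpace ℝ (Fin N),
        |bubble N x₁ μ₁ y - bubble N x₂ μ₂ y| ≤
          C * (μ₁ * ‖x₁ - x₂‖ + μ₁⁻¹ * |μ₁ - μ₂|) * bubble N x₁ μ₁ y := by
  have hN3 : (3:ℝ) ≤ (N:ℝ) := by exact_mod_cast hN
  set p : ℝ := ((N:ℝ) - 2) / 2 with hpdef
  have hp : 0 < p := by rw [hpdef]; linarith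
  set M : ℝ := p * 31 ^ p * 31 with hMdef
  have h31p : 0 < (31:ℝ) ^ p := Real.rpow_pos_of_pos (by norm_num) p
  have hMpos : 0 < M := by rw [hMdef]; positivity
  refine ⟨(31:ℝ) ^ p * M + 20 * M + 1, by positivity, ?_⟩
  intro x₁ x₂ μ₁ μ₂ hμ₁ hμ₂ hd1 hμdiff y
  set d : ℝ := μ₁ * ‖x₁ - x₂‖ with hddef
  set ε : ℝ := μ₁⁻¹ * |μ₁ - μ₂| with hεdef
  have hd0 : 0 ≤ d := by rw [hddef]; positivity
  have hε0 : 0 ≤ ε := by rw [hεdef]; positivity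
  have hεhalf : ε ≤ 1/2 := by
    rw [hεdef, inv_mul_le_iff₀ hμ₁]
    linarith [hμdiff]
  have hεeq : |μ₁ - μ₂| = μ₁ * ε := by
    rw [hεdef]; field_simp
  set t : ℝ := μ₁ * ‖y - x₁‖ with htdef
  set s : ℝ := μ₂ * ‖y - x₂‖ with hsdef
  have ht0 : 0 ≤ t := by rw [htdef]; positivity
  have hs0 : 0 ≤ s := by rw [hsdef]; positivity
  set u : ℝ := 1 + μ₁ ^ 2 * ‖y - x₁‖ ^ 2 with hudef
  set v : ℝ := 1 + μ₂ ^ 2 * ‖y - x₂‖ ^ 2 with hvdef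
  have hut : u = 1 + t ^ 2 := by rw [hudef, htdef]; ring
  have hvs : v = 1 + s ^ 2 := by rw [hvdef, hsdef]; ring
  have hu1 : 1 ≤ u := by rw [hut]; nlinarith [sq_nonneg t]
  have hv1 : 1 ≤ v := by rw [hvs]; nlinarith [sq_nonneg s]
  have hu0 : 0 < u := by linarith
  have hv0 : 0 < v := by linarith
  set m : ℝ := μ₂ / μ₁ with hmdef
  set r : ℝ := u / v with hrdef
  set δ : ℝ := d + ε with hδdef
  have hδ0 : 0 ≤ δ := by rw [hδdef]; positivity
  have hδ32 : δ ≤ 3/2 := by rw [hδdef]; linarith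
  have hm1 : |m - 1| = ε := by
    rw [hmdef]
    rw [show μ₂ / μ₁ - 1 = -((μ₁ - μ₂) / μ₁) by field_simp; ring]
    rw [abs_neg, abs_div, abs_of_pos hμ₁, hεdef]
    ring
  have hm_abs : |m - 1| ≤ 1/2 := by rw [hm1]; exact hεhalf
  have hm_lo : (31:ℝ)⁻¹ ≤ m := by
    have h := abs_le.mp hm_abs
    have h31 : (31:ℝ)⁻¹ ≤ 1/2 := by norm_num
    linarith [h.1]
  have hm_hi : m ≤ 31 := by
    have h := abs_le.mp hm_abs
    linarith [h.2]
  have htri1 : ‖y - x₂‖ ≤ ‖y - x₁‖ + ‖x₁ - x₂‖ := by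
    calc ‖y - x₂‖ = ‖(y - x₁) + (x₁ - x₂)‖ := by rw [sub_add_sub_cancel]
      _ ≤ ‖y - x₁‖ + ‖x₁ - x₂‖ := norm_add_le _ _
  have htri2 : ‖y - x₁‖ ≤ ‖y - x₂‖ + ‖x₁ - x₂‖ := by
    calc ‖y - x₁‖ = ‖(y - x₂) + (x₂ - x₁)‖ := by rw [sub_add_sub_cancel]
      _ ≤ ‖y - x₂‖ + ‖x₂ - x₁‖ := norm_add_le _ _
      _ = ‖y - x₂‖ + ‖x₁ - x₂‖ := by rw [norm_sub_rev x₂ x₁]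
  have habs : |μ₁ - μ₂| ≤ μ₁ * ε := hεeq.le
  have habs' := abs_le.mp habs
  have hμ21 : μ₂ ≤ (1 + ε) * μ₁ := by linarith [habs'.1]
  have hμ12 : μ₁ ≤ (1 + 2*ε) * μ₂ := aux_mu hμ₁ hε0 hεhalf habs'.2
  have hsbound : s ≤ (1 + ε) * (t + d) := by
    calc s = μ₂ * ‖y - x₂‖ := hsdef
      _ ≤ μ₂ * (‖y - x₁‖ + ‖x₁ - x₂‖) := mul_le_mul_of_nonneg_left htri1 hμ₂.le
      _ ≤ ((1+ε)*μ₁) * (‖y - x₁‖ + ‖x₁ - x₂‖) := by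
          apply mul_le_mul_of_nonneg_right hμ21; positivity
      _ = (1 + ε) * (t + d) := by rw [htdef, hddef]; ring
  have htbound : t ≤ (1 + 2*ε) * (s + d) := by
    have h1 : t ≤ μ₁ * ‖y - x₂‖ + d := by
      rw [htdef, hddef]
      calc μ₁ * ‖y - x₁‖ ≤ μ₁ * (‖y - x₂‖ + ‖x₁ - x₂‖) :=
            mul_le_mul_of_nonneg_left htri2 hμ₁.le
        _ = μ₁ * ‖y - x₂‖ + μ₁ * ‖x₁ - x₂‖ := by ring
    have h2 : μ₁ * ‖y - x₂‖ ≤ (1 + 2*ε) * s := by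
      rw [hsdef, ← mul_assoc]
      exact mul_le_mul_of_nonneg_right hμ12 (norm_nonneg _)
    have h3 : d ≤ (1 + 2*ε) * d := by have hh := mul_nonneg hε0 hd0; linarith
    calc t ≤ (1 + 2*ε) * s + d := by linarith
      _ ≤ (1 + 2*ε) * s + (1 + 2*ε) * d := by linarith
      _ = (1 + 2*ε) * (s + d) := by ring
  have hd1' : d ≤ 1 := hd1
  have hA : v ≤ (1 + 20*δ) * u := by
    rw [hut, hvs, hδdef]
    exact claimA ht0 hs0 hd0 hd1' hε0 hεhalf hsbound
  have hB : u ≤ (1 + 20*δ) * v := by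
    rw [hut, hvs, hδdef]
    exact claimB ht0 hs0 hd0 hd1' hε0 hεhalf htbound
  obtain ⟨hr_lo, hr_hi, hr1⟩ := rbounds hu1 hv1 hδ0 hδ32 hA hB
  have hr0 : 0 < r := by rw [hrdef]; positivity
  -- key identity
  set a : ℝ := ((N : ℝ) * ((N : ℝ) - 2)) ^ (((N : ℝ) - 2) / 4) with hadef
  have ha0 : 0 < a := by
    rw [hadef]; exact Real.rpow_pos_of_pos (mul_pos (by linarith : (0:ℝ) < (N:ℝ)) (by linarith : (0:ℝ) < (N:ℝ) - 2)) _
  have hB1 : bubble N x₁ μ₁ y = a * μ₁ ^ p * u ^ (-p) := by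
    rw [bubble]
  have hB2 : bubble N x₂ μ₂ y = a * μ₂ ^ p * v ^ (-p) := by
    rw [bubble]
  have hB1pos : 0 < bubble N x₁ μ₁ y := by
    rw [hB1]
    exact mul_pos (mul_pos ha0 (Real.rpow_pos_of_pos hμ₁ p)) (Real.rpow_pos_of_pos hu0 (-p))
  have hkey : bubble N x₂ μ₂ y = m ^ p * r ^ p * bubble N x₁ μ₁ y := by
    rw [hB1, hB2, hmdef, hrdef]
    rw [Real.div_rpow hμ₂.le hμ₁.le, Real.div_rpow hu0.le hv0.le,
      Real.rpow_neg hu0.le, Real.rpow_neg hv0.le]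
    exact key_id (ne_of_gt (Real.rpow_pos_of_pos hμ₁ p))
      (ne_of_gt (Real.rpow_pos_of_pos hu0 p)) (ne_of_gt (Real.rpow_pos_of_pos hv0 p))
  have hrp_hi : r ^ p ≤ 31 ^ p := Real.rpow_le_rpow hr0.le hr_hi hp.le
  have hrp0 : 0 ≤ r ^ p := (Real.rpow_pos_of_pos hr0 p).le
  have hmlip : |m ^ p - 1| ≤ M * ε := by
    calc |m ^ p - 1| ≤ M * |m - 1| := rpow_lip hp hm_lo hm_hi
      _ = M * ε := by rw [hm1]
  have hrlip : |r ^ p - 1| ≤ M * (20*δ) := by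
    calc |r ^ p - 1| ≤ M * |r - 1| := rpow_lip hp hr_lo hr_hi
      _ ≤ M * (20*δ) := mul_le_mul_of_nonneg_left hr1 hMpos.le
  have step : |1 - m ^ p * r ^ p| ≤ M * ε * 31 ^ p + M * (20*δ) := by
    have e : 1 - m ^ p * r ^ p = -((m ^ p - 1) * r ^ p) + -(r ^ p - 1) := by ring
    calc |1 - m ^ p * r ^ p|
        = |(-((m ^ p - 1) * r ^ p)) + -(r ^ p - 1)| := by rw [e]
      _ ≤ |(-((m ^ p - 1) * r ^ p))| + |(-(r ^ p - 1))| := abs_add_le _ _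
      _ = |m ^ p - 1| * r ^ p + |r ^ p - 1| := by
          rw [abs_neg, abs_neg, abs_mul, abs_of_nonneg hrp0]
      _ ≤ (M * ε) * 31 ^ p + M * (20*δ) :=
          add_le_add (mul_le_mul hmlip hrp_hi hrp0 (mul_nonneg hMpos.le hε0)) hrlip
  have hεδ : ε ≤ δ := by rw [hδdef]; linarith
  have hq : |1 - m ^ p * r ^ p| ≤ ((31:ℝ) ^ p * M + 20 * M + 1) * δ :=
    final_comb hMpos h31p hε0 hεδ step
  calc |bubble N x₁ μ₁ y - bubble N x₂ μ₂ y|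
      = |1 - m ^ p * r ^ p| * bubble N x₁ μ₁ y := by
        rw [hkey]
        rw [show bubble N x₁ μ₁ y - m ^ p * r ^ p * bubble N x₁ μ₁ y
            = (1 - m ^ p * r ^ p) * bubble N x₁ μ₁ y by ring]
        rw [abs_mul, abs_of_pos hB1pos]
    _ ≤ (((31:ℝ) ^ p * M + 20 * M + 1) * δ) * bubble N x₁ μ₁ y :=
        mul_le_mul_of_nonneg_right hq hB1pos.le
    _ = ((31:ℝ) ^ p * M + 20 * M + 1) * (μ₁ * ‖x₁ - x₂‖ + μ₁⁻¹ * |μ₁ - μ₂|) * bubble N x₁ μ₁ y := by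
        rw [hδdef, hddef, hεdef]
end
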